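/- For every integer n ≥ 2, H_{v_n}(1/(n(n−1))) = ln n − (1 − 2/n)·ln(n−1) and ‖v_n(1/(n(n−1)))‖_{1/2} = 4(n−1)/n. Moreover, for every integer n ≥ 3 the point p = 1/(n(n−1)) satisfies the tangency equation for α = 1/2, i.e. (ln n − H_{v_n}(p))·D_{n,1/2}(p) = n − ‖v_n(p)‖_{1/2} at p = 1/(n(n−1)) (note n^{1/(1/2)−1} = n). -/

import Mathlib

open Real

/-- Shannon entropy (natural log, with `0 * log 0 = 0` since `Real.log 0 = 0`). -/
noncomputable def shannonEntropy {n : ℕ} (p : Fin n → ℝ) : ℝ :=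
  -∑ i, p i * Real.log (p i)

/-- ℓ_α-norm of a vector (real power). -/
noncomputable def lNorm {n : ℕ} (α : ℝ) (p : Fin n → ℝ) : ℝ :=
  (∑ i, p i ^ α) ^ (1 / α)

/-- `p` is an `n`-ary probability vector. -/
def IsProbVec {n : ℕ} (p : Fin n → ℝ) : Prop :=
  (∀ i, 0 ≤ p i) ∧ ∑ i, p i = 1

/-- The vector `v_n(q)`: first entry `1 - (n-1)q`, the other `n-1` entries equal `q`. -/
noncomputable def vVec (n : ℕ) (q : ℝ) : Fin n → ℝ :=
  fun i => if (i : ℕ) = 0 then 1 - ((n : ℝ) - 1) * q else q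

/-- The vector `w_n(r)`: first `⌊1/r⌋` entries equal `r`, the next entry is
`1 - ⌊1/r⌋·r`, the remaining entries are `0`. -/
noncomputable def wVec (n : ℕ) (r : ℝ) : Fin n → ℝ :=
  fun i => if (i : ℕ) < ⌊1 / r⌋₊ then r
           else if (i : ℕ) = ⌊1 / r⌋₊ then 1 - (⌊1 / r⌋₊ : ℝ) * r
           else 0

/-- `H_{v_n}(p) = H(v_n(p))`. -/
noncomputable def Hv (n : ℕ) (p : ℝ) : ℝ := shannonEntropy (vVec n p)

/-- The derivative of `‖v_n(p)‖_α` with respect to `H_{v_n}(p)`. -/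
noncomputable def Dva (n : ℕ) (α p : ℝ) : ℝ :=
  (((n : ℝ) - 1) * p ^ α + (1 - ((n : ℝ) - 1) * p) ^ α) ^ (1 / α - 1) *
    ((p ^ (α - 1) - (1 - ((n : ℝ) - 1) * p) ^ (α - 1)) /
      (Real.log (1 - ((n : ℝ) - 1) * p) - Real.log p))

/-- The tangency equation `(ln n − H_{v_n}(p))·D_{n,α}(p) = n^{1/α−1} − ‖v_n(p)‖_α`. -/
def TangencyEq (n : ℕ) (α p : ℝ) : Prop :=
  (Real.log n - Hv n p) * Dva n α p = (n : ℝ) ^ (1 / α - 1) - lNorm α (vVec n p)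

lemma sum_vVec_apply {n : ℕ} (hn : 1 ≤ n) (q : ℝ) (f : ℝ → ℝ) :
    ∑ i, f (vVec n q i) = f (1 - ((n : ℝ) - 1) * q) + ((n : ℝ) - 1) * f q := by
  obtain ⟨m, rfl⟩ : ∃ m, n = m + 1 := ⟨n - 1, by omega⟩
  unfold vVec
  rw [Fin.sum_univ_succ]
  simp only [Fin.val_zero, if_true, Fin.val_succ, Nat.succ_ne_zero, if_false,
    Finset.sum_const, Finset.card_univ, Fintype.card_fin, nsmul_eq_mul]
  push_cast
  ring_nf

theorem stmt14' (n : ℕ) (hn : 2 ≤ n) :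
    Hv n (1 / ((n : ℝ) * ((n : ℝ) - 1))) =
      Real.log n - (1 - 2 / (n : ℝ)) * Real.log ((n : ℝ) - 1) ∧
    lNorm (1 / 2) (vVec n (1 / ((n : ℝ) * ((n : ℝ) - 1)))) = 4 * ((n : ℝ) - 1) / (n : ℝ) ∧
    (3 ≤ n → TangencyEq n (1 / 2) (1 / ((n : ℝ) * ((n : ℝ) - 1)))) := by
  have hn2 : (2 : ℝ) ≤ (n : ℝ) := by exact_mod_cast hn
  set N : ℝ := (n : ℝ) with hNdef
  have hN0 : (0 : ℝ) < N := by linarith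
  have hM0 : (0 : ℝ) < N - 1 := by linarith
  set p : ℝ := 1 / (N * (N - 1)) with hpdef
  have hp0 : 0 < p := by positivity
  have hkey : 1 - (N - 1) * p = (N - 1) / N := by
    rw [hpdef]; field_simp
  have hlp : Real.log p = -(Real.log N + Real.log (N - 1)) := by
    rw [hpdef, one_div, Real.log_inv, Real.log_mul hN0.ne' hM0.ne']
  have hla : Real.log ((N - 1) / N) = Real.log (N - 1) - Real.log N :=
    Real.log_div hM0.ne' hN0.ne'
  have hnp : (N - 1) * p = 1 / N := by rw [hpdef]; field_simp
  -- part 1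
  have h1 : Hv n p = Real.log N - (1 - 2 / N) * Real.log (N - 1) := by
    unfold Hv shannonEntropy
    rw [sum_vVec_apply (by omega) p (fun x => x * Real.log x)]
    simp only [← hNdef, hkey, hla, hlp]
    rw [show (N - 1) * (p * -(Real.log N + Real.log (N - 1))) =
        (1 / N) * -(Real.log N + Real.log (N - 1)) by rw [← hnp]; ring]
    field_simp
    ring
  -- sqrt setup
  set x : ℝ := Real.sqrt N with hxdef
  set y : ℝ := Real.sqrt (N - 1) with hydef
  have hx0 : 0 < x := Real.sqrt_pos.mpr hN0
  have hy0 : 0 < y := Real.sqrt_pos.mpr hM0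
  have hx2 : x ^ 2 = N := Real.sq_sqrt hN0.le
  have hy2 : y ^ 2 = N - 1 := Real.sq_sqrt hM0.le
  have hra : ((N - 1) / N) ^ ((1 : ℝ) / 2) = y / x := by
    rw [← Real.sqrt_eq_rpow, Real.sqrt_div hM0.le]
  have hrp : p ^ ((1 : ℝ) / 2) = 1 / (x * y) := by
    rw [← Real.sqrt_eq_rpow, hpdef, Real.sqrt_div zero_le_one, Real.sqrt_one,
      Real.sqrt_mul hN0.le]
  have hsum : (N - 1) * p ^ ((1 : ℝ) / 2) + ((N - 1) / N) ^ ((1 : ℝ) / 2) = 2 * y / x := by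
    rw [hra, hrp, ← hy2]; field_simp; ring
  -- part 2
  have h2 : lNorm (1 / 2) (vVec n p) = 4 * (N - 1) / N := by
    unfold lNorm
    rw [sum_vVec_apply (by omega) p (fun t => t ^ ((1 : ℝ) / 2))]
    simp only [← hNdef, hkey]
    rw [show ((N - 1) / N) ^ ((1:ℝ)/2) + (N - 1) * p ^ ((1:ℝ)/2) = 2 * y / x by
      rw [← hsum]; ring]
    rw [show (1 : ℝ) / (1 / 2) = 2 by norm_num, Real.rpow_two]
    rw [← hy2, ← hx2]; field_simp; ring
  refine ⟨h1, h2, fun hn3 => ?_⟩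
  have hn3' : (3 : ℝ) ≤ N := by rw [hNdef]; exact_mod_cast hn3
  have hL0 : 0 < Real.log (N - 1) := Real.log_pos (by linarith)
  unfold TangencyEq Dva
  rw [← hNdef, hkey, h1, h2, hla, hlp]
  rw [show (1 : ℝ) / (1 / 2) - 1 = 1 by norm_num, Real.rpow_one, Real.rpow_one]
  rw [show (1 : ℝ) / 2 - 1 = -(1/2) by norm_num]
  rw [Real.rpow_neg hp0.le, Real.rpow_neg (by positivity : (0:ℝ) ≤ (N-1)/N)]
  rw [hsum, hra, hrp]
  rw [show Real.log (N - 1) - Real.log N - -(Real.log N + Real.log (N - 1)) =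
    2 * Real.log (N - 1) by ring]
  set L : ℝ := Real.log (N - 1) with hLdef
  rw [show ((1:ℝ) / (x * y))⁻¹ = x * y by rw [one_div, inv_inv]]
  have hstep : (2 * y / x) * ((x * y - (y / x)⁻¹) / (2 * L)) = (N - 2) / L := by
    have h : x * y - (y / x)⁻¹ = x * (N - 2) / y := by
      rw [show N - 2 = y ^ 2 - 1 by rw [hy2]; ring]
      field_simp
    rw [h]; field_simp
  rw [hstep]
  field_simp
  ring


theorem stmt14 (n : ℕ) (hn : 2 ≤ n) :
    Hv n (1 / ((n : ℝ) * ((n : ℝ) - 1))) =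
      Real.log n - (1 - 2 / (n : ℝ)) * Real.log ((n : ℝ) - 1) ∧
    lNorm (1 / 2) (vVec n (1 / ((n : ℝ) * ((n : ℝ) - 1)))) = 4 * ((n : ℝ) - 1) / (n : ℝ) ∧
    (3 ≤ n → TangencyEq n (1 / 2) (1 / ((n : ℝ) * ((n : ℝ) - 1)))) := by
  exact stmt14' n hn
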